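/- The composition of cobordisms in the combinatorial model of 2-Cob is associative: given cobordisms φ: W → X, ψ: X → Y, χ: Y → Z represented by component sets A, B, C with genus functions g₁, g₂, g₃, the component set and genus function of χ∘(ψ∘φ) agree (up to canonical isomorphism of iterated pushouts) with those of (χ∘ψ)∘φ. -/

import Mathlib

open scoped Classical

/-- The relation generating the pushout of a span `A ← k → B` of (finite) sets. -/
def PRel {k A B : Type} (f : k → A) (g : k → B) : A ⊕ B → A ⊕ B → Prop :=
  fun x y => ∃ z, x = Sum.inl (f z) ∧ y = Sum.inr (g z)

/-- The pushout of the span `A ← k → B`. -/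
def Pushout {k A B : Type} (f : k → A) (g : k → B) : Type :=
  Quot (PRel f g)

/-- Canonical map `ι_A : A → A ⊔_k B`. -/
def pInl {k A B : Type} (f : k → A) (g : k → B) (a : A) : Pushout f g :=
  Quot.mk _ (Sum.inl a)

/-- Canonical map `ι_B : B → A ⊔_k B`. -/
def pInr {k A B : Type} (f : k → A) (g : k → B) (b : B) : Pushout f g :=
  Quot.mk _ (Sum.inr b)

instance {k A B : Type} (f : k → A) (g : k → B) [Finite A] [Finite B] :
    Finite (Pushout f g) :=
  Quot.finite _

noncomputable instance {k A B : Type} (f : k → A) (g : k → B) [Fintype A] [Fintype B] :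
    Fintype (Pushout f g) :=
  Fintype.ofFinite _

/-- The genus formula of Definition 3.4:
`g(x) = 1 + Σ_{ι_A(a)=x}(g₁(a)−1) + Σ_{ι_B(b)=x}(g₂(b)−1) + #{y ∈ k : y ↦ x}`. -/
noncomputable def compGenus {k A B : Type} [Fintype k] [Fintype A] [Fintype B]
    (f : k → A) (g : k → B) (g1 : A → ℤ) (g2 : B → ℤ) (x : Pushout f g) : ℤ :=
  1 + (∑ a ∈ Finset.univ.filter (fun a => pInl f g a = x), (g1 a - 1))
    + (∑ b ∈ Finset.univ.filter (fun b => pInr f g b = x), (g2 b - 1))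
    + ((Finset.univ.filter (fun y : k => pInl f g (f y) = x)).card : ℤ)

/-- A combinatorial 2-cobordism from the finite set `m` to the finite set `n`. -/
structure Cob (m n : Type) : Type 1 where
  C : Type
  [fin : Fintype C]
  lm : m → C
  ln : n → C
  g : C → ℕ

attribute [instance] Cob.fin

/-- Composition of combinatorial 2-cobordisms via pushout of component sets
and the genus formula of Definition 3.4. -/
noncomputable def Cob.comp {m k n : Type} [Fintype k] (ψ : Cob k n) (φ : Cob m k) :
    Cob m n where
  C := Pushout φ.ln ψ.lm
  lm := fun x => pInl φ.ln ψ.lm (φ.lm x)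
  ln := fun y => pInr φ.ln ψ.lm (ψ.ln y)
  g := fun x =>
    (compGenus φ.ln ψ.lm (fun a => (φ.g a : ℤ)) (fun b => (ψ.g b : ℤ)) x).toNat

/-- Equivalence of combinatorial 2-cobordisms: a bijection of component sets
intertwining the structure maps and the genus functions. -/
def Cob.Equiv {m n : Type} (φ φ' : Cob m n) : Prop :=
  ∃ χ : φ.C ≃ φ'.C,
    (∀ x, χ (φ.lm x) = φ'.lm x) ∧ (∀ y, χ (φ.ln y) = φ'.ln y) ∧
    (∀ c, φ'.g (χ c) = φ.g c)

/-- A cofibration: `l_n` is injective and `l_n` lifts through `l_m`. -/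
def Cob.IsCofib {m n : Type} (φ : Cob m n) : Prop :=
  Function.Injective φ.ln ∧ ∃ u : n → m, ∀ y, φ.lm (u y) = φ.ln y

/-- A fibration: `l_m` is injective, `l_n` is surjective, and `g ∘ l_m = 0`. -/
def Cob.IsFib {m n : Type} (φ : Cob m n) : Prop :=
  Function.Injective φ.lm ∧ Function.Surjective φ.ln ∧ ∀ x, φ.g (φ.lm x) = 0

/-- The five local conditions of Definition 5.2.1 defining an oriented 1-cobordism
between signed finite sets (signs recorded by Boolean functions, `true` = `+`). -/
def IsOriented {m n C : Type} (sm : m → Bool) (sn : n → Bool)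
    (lm : m → C) (ln : n → C) : Prop :=
  ∀ c : C,
    (∃ a b : m, sm a = true ∧ sm b = false ∧ a ≠ b ∧
      (∀ x, lm x = c ↔ (x = a ∨ x = b)) ∧ (∀ y, ln y ≠ c)) ∨
    (∃ a b : n, sn a = true ∧ sn b = false ∧ a ≠ b ∧
      (∀ y, ln y = c ↔ (y = a ∨ y = b)) ∧ (∀ x, lm x ≠ c)) ∨
    (∃ a : m, ∃ b : n, sm a = sn b ∧
      (∀ x, lm x = c ↔ x = a) ∧ (∀ y, ln y = c ↔ y = b)) ∨
    ((∀ x, lm x ≠ c) ∧ (∀ y, ln y ≠ c))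

section CardBound

variable {k A B : Type} (f : k → A) (g : k → B)

/-- chains of length n from v to r in the symmetrized relation -/
def reach (r : A ⊕ B) : ℕ → (A ⊕ B) → Prop
  | 0, v => v = r
  | (n+1), v => ∃ u, (PRel f g v u ∨ PRel f g u v) ∧ reach r n u

lemma reach_trans {r s : A ⊕ B} : ∀ {n m : ℕ} {v : A ⊕ B},
    reach f g r n v → reach f g s m r → reach f g s (n + m) v := by
  intro n
  induction n with
  | zero => intro m v h1 h2; cases h1; simpa using h2
  | succ n ih =>
    intro m v h1 h2
    obtain ⟨u, hR, hu⟩ := h1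
    exact (by rw [Nat.succ_add]; exact ⟨u, hR, ih hu h2⟩)

lemma reach_symm : ∀ {n : ℕ} {v r : A ⊕ B}, reach f g r n v → reach f g v n r := by
  intro n
  induction n with
  | zero => intro v r h; cases h; rfl
  | succ n ih =>
    intro v r h
    obtain ⟨u, hR, hu⟩ := h
    have h1 : reach f g v 1 u := ⟨v, hR.symm, rfl⟩
    exact reach_trans f g (ih hu) h1

lemma exists_reach {v r : A ⊕ B} (h : Quot.mk (PRel f g) v = Quot.mk (PRel f g) r) :
    ∃ n, reach f g r n v := by
  have h' := Quot.eq.mp h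
  clear h
  induction h' with
  | rel a b hab => exact ⟨1, b, Or.inl hab, rfl⟩
  | refl a => exact ⟨0, rfl⟩
  | symm a b _ ih => obtain ⟨n, hn⟩ := ih; exact ⟨n, reach_symm f g hn⟩
  | trans a b c _ _ ih1 ih2 =>
    obtain ⟨n, hn⟩ := ih1; obtain ⟨m, hm⟩ := ih2
    exact ⟨n + m, reach_trans f g hn hm⟩

/-- distance to `r` (0 if unreachable) -/
noncomputable def dst (r v : A ⊕ B) : ℕ :=
  if h : ∃ n, reach f g r n v then Nat.find h else 0

lemma dst_spec {r v : A ⊕ B} (h : ∃ n, reach f g r n v) :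
    reach f g r (dst f g r v) v := by
  rw [dst, dif_pos h]; exact Nat.find_spec h

lemma dst_le {r v : A ⊕ B} {m : ℕ} (h : reach f g r m v) : dst f g r v ≤ m := by
  rw [dst, dif_pos ⟨m, h⟩]; exact Nat.find_min' _ h

variable [Fintype k] [Fintype A] [Fintype B]

lemma card_class_le (x : Pushout f g) :
    (Finset.univ.filter (fun v : A ⊕ B => Quot.mk (PRel f g) v = x)).card ≤
      (Finset.univ.filter (fun y : k => pInl f g (f y) = x)).card + 1 := by
  obtain ⟨r, hr⟩ := Quot.exists_rep x
  set T := Finset.univ.filter (fun v : A ⊕ B => Quot.mk (PRel f g) v = x) with hT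
  have hrT : r ∈ T := by rw [hT, Finset.mem_filter]; exact ⟨Finset.mem_univ _, hr⟩
  have hmem : ∀ v ∈ T, Quot.mk (PRel f g) v = x := by
    intro v hv; simp only [hT, Finset.mem_filter] at hv; exact hv.2
  have hreach : ∀ v ∈ T, ∃ n, reach f g r n v := fun v hv =>
    exists_reach f g (by rw [hmem v hv, ← hr])
  have key : ∀ v ∈ T.erase r, ∃ z : k,
      pInl f g (f z) = x ∧
      ((v = Sum.inl (f z) ∧ dst f g r (Sum.inr (g z)) < dst f g r v)
        ∨ (v = Sum.inr (g z) ∧ dst f g r (Sum.inl (f z)) < dst f g r v)) := by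
    intro v hv
    have hvT : v ∈ T := Finset.mem_of_mem_erase hv
    have hvr : v ≠ r := Finset.ne_of_mem_erase hv
    have hrv := dst_spec f g (hreach v hvT)
    rcases hd : dst f g r v with _ | m
    · rw [hd] at hrv; exact absurd hrv hvr
    · rw [hd] at hrv
      obtain ⟨u, hR, hu⟩ := hrv
      have hdu : dst f g r u ≤ m := dst_le f g hu
      rcases hR with ⟨z, hv1, hu1⟩ | ⟨z, hu1, hv1⟩
      · refine ⟨z, ?_, Or.inl ⟨hv1, ?_⟩⟩
        · show Quot.mk _ (Sum.inl (f z)) = x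
          rw [← hv1]; exact hmem v hvT
        · rw [← hu1]; omega
      · refine ⟨z, ?_, Or.inr ⟨hv1, ?_⟩⟩
        · show Quot.mk _ (Sum.inl (f z)) = x
          rw [← hmem v hvT, hv1]
          exact Quot.sound ⟨z, rfl, rfl⟩
        · rw [← hu1]; omega
  -- injection from T.erase r into the edge set
  rcases Finset.eq_empty_or_nonempty (T.erase r) with hE | ⟨v0, hv0⟩
  · have := Finset.card_erase_add_one hrT
    rw [hE] at this; simp at this; omega
  have hinj : (T.erase r).card ≤
      (Finset.univ.filter (fun y : k => pInl f g (f y) = x)).card := by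
    set F : (A ⊕ B) → k := fun v => if h : v ∈ T.erase r
      then Classical.choose (key v h) else Classical.choose (key v0 hv0) with hF
    have hFspec : ∀ v (h : v ∈ T.erase r),
        pInl f g (f (F v)) = x ∧
        ((v = Sum.inl (f (F v)) ∧ dst f g r (Sum.inr (g (F v))) < dst f g r v)
          ∨ (v = Sum.inr (g (F v)) ∧ dst f g r (Sum.inl (f (F v))) < dst f g r v)) := by
      intro v h
      rw [hF]; simp only [dif_pos h]
      exact Classical.choose_spec (key v h)
    refine Finset.card_le_card_of_injOn F ?_ ?_
    · intro v hv
      refine Finset.mem_filter.mpr ⟨Finset.mem_univ _, ?_⟩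
      exact (hFspec v hv).1
    · intro v1 h1 v2 h2 heq
      simp only [Finset.coe_erase, Set.mem_diff, Finset.mem_coe] at h1 h2
      have h1' : v1 ∈ T.erase r := Finset.mem_erase.mpr ⟨by simpa using h1.2, h1.1⟩
      have h2' : v2 ∈ T.erase r := Finset.mem_erase.mpr ⟨by simpa using h2.2, h2.1⟩
      rcases (hFspec v1 h1').2 with ⟨e1, d1⟩ | ⟨e1, d1⟩ <;>
        rcases (hFspec v2 h2').2 with ⟨e2, d2⟩ | ⟨e2, d2⟩
      · rw [e1, e2, heq]
      · exfalso
        rw [← heq] at d2 e2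
        have q1 : dst f g r v1 = dst f g r (Sum.inl (f (F v1))) := by rw [← e1]
        have q2 : dst f g r v2 = dst f g r (Sum.inr (g (F v1))) := by rw [← e2]
        omega
      · exfalso
        rw [← heq] at d2 e2
        have q1 : dst f g r v1 = dst f g r (Sum.inr (g (F v1))) := by rw [← e1]
        have q2 : dst f g r v2 = dst f g r (Sum.inl (f (F v1))) := by rw [← e2]
        omega
      · rw [e1, e2, heq]
  have := Finset.card_erase_add_one hrT
  omega

end CardBound


section Nonneg

variable {k A B : Type} [Fintype k] [Fintype A] [Fintype B] (f : k → A) (g : k → B)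

lemma filter_sum_card (P : A ⊕ B → Prop) :
    (Finset.univ.filter P).card =
      (Finset.univ.filter (fun a => P (Sum.inl a))).card +
        (Finset.univ.filter (fun b => P (Sum.inr b))).card := by
  classical
  rw [← Finset.card_disjSum]
  congr 1
  ext (a | b) <;> simp

lemma card_fibers_le (x : Pushout f g) :
    (Finset.univ.filter (fun a : A => pInl f g a = x)).card +
      (Finset.univ.filter (fun b : B => pInr f g b = x)).card ≤
      (Finset.univ.filter (fun y : k => pInl f g (f y) = x)).card + 1 := by
  have h := card_class_le f g x
  rwa [filter_sum_card (fun v : A ⊕ B => Quot.mk (PRel f g) v = x)] at h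

lemma compGenus_nonneg (g1 : A → ℤ) (g2 : B → ℤ)
    (h1 : ∀ a, 0 ≤ g1 a) (h2 : ∀ b, 0 ≤ g2 b) (x : Pushout f g) :
    0 ≤ compGenus f g g1 g2 x := by
  have e1 : ∀ s : Finset A, -(s.card : ℤ) ≤ ∑ a ∈ s, (g1 a - 1) := by
    intro s
    calc -(s.card : ℤ) = ∑ _a ∈ s, (-1 : ℤ) := by simp
    _ ≤ ∑ a ∈ s, (g1 a - 1) := Finset.sum_le_sum (fun a _ => by linarith [h1 a])
  have e2 : ∀ s : Finset B, -(s.card : ℤ) ≤ ∑ b ∈ s, (g2 b - 1) := by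
    intro s
    calc -(s.card : ℤ) = ∑ _b ∈ s, (-1 : ℤ) := by simp
    _ ≤ ∑ b ∈ s, (g2 b - 1) := Finset.sum_le_sum (fun b _ => by linarith [h2 b])
  have hc := card_fibers_le f g x
  have := e1 (Finset.univ.filter (fun a : A => pInl f g a = x))
  have := e2 (Finset.univ.filter (fun b : B => pInr f g b = x))
  unfold compGenus
  push_cast at hc ⊢
  linarith

lemma compGenus_toNat (g1 : A → ℤ) (g2 : B → ℤ)
    (h1 : ∀ a, 0 ≤ g1 a) (h2 : ∀ b, 0 ≤ g2 b) (x : Pushout f g) :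
    ((compGenus f g g1 g2 x).toNat : ℤ) = compGenus f g g1 g2 x :=
  Int.toNat_of_nonneg (compGenus_nonneg f g g1 g2 h1 h2 x)

end Nonneg

/-- collapsing a fiberwise double sum -/
lemma fiber_collapse {α β γ : Type} [Fintype α] [Fintype β]
    (h : α → β) (q : β → γ) (x : γ) (F : α → ℤ) :
    ∑ p ∈ Finset.univ.filter (fun p => q p = x),
        ∑ a ∈ Finset.univ.filter (fun a => h a = p), F a
      = ∑ a ∈ Finset.univ.filter (fun a => q (h a) = x), F a := by
  classical
  have step1 : ∀ p, (∑ a ∈ Finset.univ.filter (fun a => h a = p), F a)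
      = ∑ a : α, if h a = p then F a else 0 := by
    intro p; rw [Finset.sum_filter]
  simp only [step1]
  rw [Finset.sum_comm]
  rw [Finset.sum_filter]
  refine Finset.sum_congr rfl (fun a _ => ?_)
  rw [Finset.sum_ite_eq]
  simp

section Assoc

variable {X Y A B C : Type} (f1 : X → A) (f2 : X → B) (f3 : Y → B) (f4 : Y → C)

def toRP : Pushout f1 f2 → Pushout f1 (fun x => pInl f3 f4 (f2 x)) :=
  Quot.lift (fun s => match s with
    | Sum.inl a => Quot.mk _ (Sum.inl a)
    | Sum.inr b => Quot.mk _ (Sum.inr (pInl f3 f4 b)))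
    (by rintro _ _ ⟨z, rfl, rfl⟩; exact Quot.sound ⟨z, rfl, rfl⟩)

def toR : Pushout (fun y => pInr f1 f2 (f3 y)) f4 → Pushout f1 (fun x => pInl f3 f4 (f2 x)) :=
  Quot.lift (fun s => match s with
    | Sum.inl p => toRP f1 f2 f3 f4 p
    | Sum.inr c => Quot.mk _ (Sum.inr (pInr f3 f4 c)))
    (by rintro _ _ ⟨y, rfl, rfl⟩
        show Quot.mk _ (Sum.inr (pInl f3 f4 (f3 y))) =
          Quot.mk (PRel f1 (fun x => pInl f3 f4 (f2 x))) (Sum.inr (pInr f3 f4 (f4 y)))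
        exact congrArg (fun t => Quot.mk _ (Sum.inr t)) (Quot.sound ⟨y, rfl, rfl⟩))

def toLQ : Pushout f3 f4 → Pushout (fun y => pInr f1 f2 (f3 y)) f4 :=
  Quot.lift (fun s => match s with
    | Sum.inl b => Quot.mk _ (Sum.inl (pInr f1 f2 b))
    | Sum.inr c => Quot.mk _ (Sum.inr c))
    (by rintro _ _ ⟨y, rfl, rfl⟩; exact Quot.sound ⟨y, rfl, rfl⟩)

def toL : Pushout f1 (fun x => pInl f3 f4 (f2 x)) → Pushout (fun y => pInr f1 f2 (f3 y)) f4 :=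
  Quot.lift (fun s => match s with
    | Sum.inl a => Quot.mk _ (Sum.inl (pInl f1 f2 a))
    | Sum.inr q => toLQ f1 f2 f3 f4 q)
    (by rintro _ _ ⟨z, rfl, rfl⟩
        show Quot.mk _ (Sum.inl (pInl f1 f2 (f1 z))) =
          Quot.mk (PRel (fun y => pInr f1 f2 (f3 y)) f4) (Sum.inl (pInr f1 f2 (f2 z)))
        exact congrArg (fun t => Quot.mk _ (Sum.inl t)) (Quot.sound ⟨z, rfl, rfl⟩))

def assocEquiv :
    Pushout (fun y => pInr f1 f2 (f3 y)) f4 ≃ Pushout f1 (fun x => pInl f3 f4 (f2 x)) where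
  toFun := toR f1 f2 f3 f4
  invFun := toL f1 f2 f3 f4
  left_inv := by
    intro q
    induction q using Quot.ind with
    | _ s =>
      cases s with
      | inl p =>
        induction p using Quot.ind with
        | _ t => cases t with
          | inl a => rfl
          | inr b => rfl
      | inr c => rfl
  right_inv := by
    intro q
    induction q using Quot.ind with
    | _ s =>
      cases s with
      | inl a => rfl
      | inr p =>
        induction p using Quot.ind with
        | _ t => cases t with
          | inl b => rfl
          | inr c => rfl

end Assoc

section GenusAssoc

lemma fiber_collapse_card {α β γ : Type} [Fintype α] [Fintype β]
    (h : α → β) (q : β → γ) (x : γ) :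
    ∑ p ∈ Finset.univ.filter (fun p => q p = x),
        ((Finset.univ.filter (fun a => h a = p)).card : ℤ)
      = ((Finset.univ.filter (fun a => q (h a) = x)).card : ℤ) := by
  classical
  have := fiber_collapse h q x (fun _ => (1 : ℤ))
  simpa using this

variable {X Y A B C : Type} [Fintype X] [Fintype Y] [Fintype A] [Fintype B] [Fintype C]
  (f1 : X → A) (f2 : X → B) (f3 : Y → B) (f4 : Y → C)
  (g1 : A → ℤ) (g2 : B → ℤ) (g3 : C → ℤ)

lemma left_expand (x : Pushout (fun y => pInr f1 f2 (f3 y)) f4) :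
    compGenus (fun y => pInr f1 f2 (f3 y)) f4 (compGenus f1 f2 g1 g2) g3 x =
    1 + (∑ a ∈ Finset.univ.filter
          (fun a => pInl (fun y => pInr f1 f2 (f3 y)) f4 (pInl f1 f2 a) = x), (g1 a - 1))
      + (∑ b ∈ Finset.univ.filter
          (fun b => pInl (fun y => pInr f1 f2 (f3 y)) f4 (pInr f1 f2 b) = x), (g2 b - 1))
      + (∑ c ∈ Finset.univ.filter
          (fun c => pInr (fun y => pInr f1 f2 (f3 y)) f4 c = x), (g3 c - 1))
      + ((Finset.univ.filter
          (fun x' : X => pInl (fun y => pInr f1 f2 (f3 y)) f4 (pInl f1 f2 (f1 x')) = x)).card : ℤ)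
      + ((Finset.univ.filter
          (fun y : Y => pInl (fun y => pInr f1 f2 (f3 y)) f4 (pInr f1 f2 (f3 y)) = x)).card : ℤ) := by
  have key : ∑ p ∈ Finset.univ.filter
        (fun p => pInl (fun y => pInr f1 f2 (f3 y)) f4 p = x),
        (compGenus f1 f2 g1 g2 p - 1)
      = (∑ a ∈ Finset.univ.filter
          (fun a => pInl (fun y => pInr f1 f2 (f3 y)) f4 (pInl f1 f2 a) = x), (g1 a - 1))
        + (∑ b ∈ Finset.univ.filter
          (fun b => pInl (fun y => pInr f1 f2 (f3 y)) f4 (pInr f1 f2 b) = x), (g2 b - 1))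
        + ((Finset.univ.filter
          (fun x' : X => pInl (fun y => pInr f1 f2 (f3 y)) f4 (pInl f1 f2 (f1 x')) = x)).card : ℤ) := by
    have hp : ∀ p ∈ Finset.univ.filter
        (fun p => pInl (fun y => pInr f1 f2 (f3 y)) f4 p = x),
        compGenus f1 f2 g1 g2 p - 1 =
          (∑ a ∈ Finset.univ.filter (fun a => pInl f1 f2 a = p), (g1 a - 1))
          + ((∑ b ∈ Finset.univ.filter (fun b => pInr f1 f2 b = p), (g2 b - 1))
          + ((Finset.univ.filter (fun x' : X => pInl f1 f2 (f1 x') = p)).card : ℤ)) := by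
      intro p _; unfold compGenus; ring
    rw [Finset.sum_congr rfl hp, Finset.sum_add_distrib, Finset.sum_add_distrib,
      fiber_collapse (pInl f1 f2) (fun p => pInl (fun y => pInr f1 f2 (f3 y)) f4 p) x
        (fun a => g1 a - 1),
      fiber_collapse (pInr f1 f2) (fun p => pInl (fun y => pInr f1 f2 (f3 y)) f4 p) x
        (fun b => g2 b - 1),
      fiber_collapse_card (fun x' : X => pInl f1 f2 (f1 x'))
        (fun p => pInl (fun y => pInr f1 f2 (f3 y)) f4 p) x]
    ring
  show 1 + (∑ p ∈ Finset.univ.filter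
        (fun p => pInl (fun y => pInr f1 f2 (f3 y)) f4 p = x),
        (compGenus f1 f2 g1 g2 p - 1))
      + (∑ c ∈ Finset.univ.filter
          (fun c => pInr (fun y => pInr f1 f2 (f3 y)) f4 c = x), (g3 c - 1))
      + ((Finset.univ.filter
          (fun y : Y => pInl (fun y => pInr f1 f2 (f3 y)) f4 (pInr f1 f2 (f3 y)) = x)).card : ℤ)
      = _
  rw [key]; ring

lemma right_expand (x : Pushout f1 (fun x => pInl f3 f4 (f2 x))) :
    compGenus f1 (fun x => pInl f3 f4 (f2 x)) g1 (compGenus f3 f4 g2 g3) x =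
    1 + (∑ a ∈ Finset.univ.filter
          (fun a => pInl f1 (fun x => pInl f3 f4 (f2 x)) a = x), (g1 a - 1))
      + (∑ b ∈ Finset.univ.filter
          (fun b => pInr f1 (fun x => pInl f3 f4 (f2 x)) (pInl f3 f4 b) = x), (g2 b - 1))
      + (∑ c ∈ Finset.univ.filter
          (fun c => pInr f1 (fun x => pInl f3 f4 (f2 x)) (pInr f3 f4 c) = x), (g3 c - 1))
      + ((Finset.univ.filter
          (fun x' : X => pInl f1 (fun x => pInl f3 f4 (f2 x)) (f1 x') = x)).card : ℤ)
      + ((Finset.univ.filter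
          (fun y : Y => pInr f1 (fun x => pInl f3 f4 (f2 x)) (pInl f3 f4 (f3 y)) = x)).card : ℤ) := by
  have key : ∑ q ∈ Finset.univ.filter
        (fun q => pInr f1 (fun x => pInl f3 f4 (f2 x)) q = x),
        (compGenus f3 f4 g2 g3 q - 1)
      = (∑ b ∈ Finset.univ.filter
          (fun b => pInr f1 (fun x => pInl f3 f4 (f2 x)) (pInl f3 f4 b) = x), (g2 b - 1))
        + (∑ c ∈ Finset.univ.filter
          (fun c => pInr f1 (fun x => pInl f3 f4 (f2 x)) (pInr f3 f4 c) = x), (g3 c - 1))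
        + ((Finset.univ.filter
          (fun y : Y => pInr f1 (fun x => pInl f3 f4 (f2 x)) (pInl f3 f4 (f3 y)) = x)).card : ℤ) := by
    have hp : ∀ q ∈ Finset.univ.filter
        (fun q => pInr f1 (fun x => pInl f3 f4 (f2 x)) q = x),
        compGenus f3 f4 g2 g3 q - 1 =
          (∑ b ∈ Finset.univ.filter (fun b => pInl f3 f4 b = q), (g2 b - 1))
          + ((∑ c ∈ Finset.univ.filter (fun c => pInr f3 f4 c = q), (g3 c - 1))
          + ((Finset.univ.filter (fun y : Y => pInl f3 f4 (f3 y) = q)).card : ℤ)) := by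
      intro q _; unfold compGenus; ring
    rw [Finset.sum_congr rfl hp, Finset.sum_add_distrib, Finset.sum_add_distrib,
      fiber_collapse (pInl f3 f4) (fun q => pInr f1 (fun x => pInl f3 f4 (f2 x)) q) x
        (fun b => g2 b - 1),
      fiber_collapse (pInr f3 f4) (fun q => pInr f1 (fun x => pInl f3 f4 (f2 x)) q) x
        (fun c => g3 c - 1),
      fiber_collapse_card (fun y : Y => pInl f3 f4 (f3 y))
        (fun q => pInr f1 (fun x => pInl f3 f4 (f2 x)) q) x]
    ring
  show 1 + (∑ a ∈ Finset.univ.filter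
        (fun a => pInl f1 (fun x => pInl f3 f4 (f2 x)) a = x), (g1 a - 1))
      + (∑ q ∈ Finset.univ.filter
        (fun q => pInr f1 (fun x => pInl f3 f4 (f2 x)) q = x),
        (compGenus f3 f4 g2 g3 q - 1))
      + ((Finset.univ.filter
          (fun x' : X => pInl f1 (fun x => pInl f3 f4 (f2 x)) (f1 x') = x)).card : ℤ)
      = _
  rw [key]; ring

end GenusAssoc

section Final

variable {X Y A B C : Type} [Fintype X] [Fintype Y] [Fintype A] [Fintype B] [Fintype C]
  (f1 : X → A) (f2 : X → B) (f3 : Y → B) (f4 : Y → C)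
  (g1 : A → ℤ) (g2 : B → ℤ) (g3 : C → ℤ)

lemma genus_assoc (x : Pushout (fun y => pInr f1 f2 (f3 y)) f4) :
    compGenus f1 (fun x => pInl f3 f4 (f2 x)) g1 (compGenus f3 f4 g2 g3)
      (toR f1 f2 f3 f4 x)
    = compGenus (fun y => pInr f1 f2 (f3 y)) f4 (compGenus f1 f2 g1 g2) g3 x := by
  have hinj : Function.Injective (toR f1 f2 f3 f4) :=
    (assocEquiv f1 f2 f3 f4).injective
  rw [left_expand, right_expand]
  have e_a : Finset.univ.filter
        (fun a : A => pInl f1 (fun x => pInl f3 f4 (f2 x)) a = toR f1 f2 f3 f4 x)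
      = Finset.univ.filter
        (fun a : A => pInl (fun y => pInr f1 f2 (f3 y)) f4 (pInl f1 f2 a) = x) := by
    refine Finset.filter_congr (fun a _ => ?_)
    constructor
    · intro h
      have h' : toR f1 f2 f3 f4 (pInl (fun y => pInr f1 f2 (f3 y)) f4 (pInl f1 f2 a))
          = toR f1 f2 f3 f4 x := h
      exact hinj h'
    · intro h
      exact congrArg (toR f1 f2 f3 f4) h
  have e_b : Finset.univ.filter
        (fun b : B => pInr f1 (fun x => pInl f3 f4 (f2 x)) (pInl f3 f4 b) = toR f1 f2 f3 f4 x)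
      = Finset.univ.filter
        (fun b : B => pInl (fun y => pInr f1 f2 (f3 y)) f4 (pInr f1 f2 b) = x) := by
    refine Finset.filter_congr (fun b _ => ?_)
    constructor
    · intro h
      have h' : toR f1 f2 f3 f4 (pInl (fun y => pInr f1 f2 (f3 y)) f4 (pInr f1 f2 b))
          = toR f1 f2 f3 f4 x := h
      exact hinj h'
    · intro h
      exact congrArg (toR f1 f2 f3 f4) h
  have e_c : Finset.univ.filter
        (fun c : C => pInr f1 (fun x => pInl f3 f4 (f2 x)) (pInr f3 f4 c) = toR f1 f2 f3 f4 x)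
      = Finset.univ.filter
        (fun c : C => pInr (fun y => pInr f1 f2 (f3 y)) f4 c = x) := by
    refine Finset.filter_congr (fun c _ => ?_)
    constructor
    · intro h
      have h' : toR f1 f2 f3 f4 (pInr (fun y => pInr f1 f2 (f3 y)) f4 c)
          = toR f1 f2 f3 f4 x := h
      exact hinj h'
    · intro h
      exact congrArg (toR f1 f2 f3 f4) h
  have e_x : Finset.univ.filter
        (fun x' : X => pInl f1 (fun x => pInl f3 f4 (f2 x)) (f1 x') = toR f1 f2 f3 f4 x)
      = Finset.univ.filter
        (fun x' : X => pInl (fun y => pInr f1 f2 (f3 y)) f4 (pInl f1 f2 (f1 x')) = x) := by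
    refine Finset.filter_congr (fun x' _ => ?_)
    constructor
    · intro h
      have h' : toR f1 f2 f3 f4
          (pInl (fun y => pInr f1 f2 (f3 y)) f4 (pInl f1 f2 (f1 x'))) = toR f1 f2 f3 f4 x := h
      exact hinj h'
    · intro h
      exact congrArg (toR f1 f2 f3 f4) h
  have e_y : Finset.univ.filter
        (fun y : Y => pInr f1 (fun x => pInl f3 f4 (f2 x)) (pInl f3 f4 (f3 y)) = toR f1 f2 f3 f4 x)
      = Finset.univ.filter
        (fun y : Y => pInl (fun y => pInr f1 f2 (f3 y)) f4 (pInr f1 f2 (f3 y)) = x) := by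
    refine Finset.filter_congr (fun y _ => ?_)
    constructor
    · intro h
      have h' : toR f1 f2 f3 f4
          (pInl (fun y' => pInr f1 f2 (f3 y')) f4 (pInr f1 f2 (f3 y))) = toR f1 f2 f3 f4 x := h
      exact hinj h'
    · intro h
      exact congrArg (toR f1 f2 f3 f4) h
  rw [e_a, e_b, e_c, e_x, e_y]

end Final



/-- Proposition 3.5: composition of combinatorial 2-cobordisms is
associative, up to the canonical identification of iterated pushouts, including the
genus functions. -/
theorem stmt_3 {W X Y Z : Type} [Fintype X] [Fintype Y]
    (φ : Cob W X) (ψ : Cob X Y) (χ : Cob Y Z) :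
    Cob.Equiv (Cob.comp χ (Cob.comp ψ φ)) (Cob.comp (Cob.comp χ ψ) φ) := by
  refine ⟨assocEquiv φ.ln ψ.lm ψ.ln χ.lm, fun w => rfl, fun z => rfl, fun c => ?_⟩
  show (compGenus φ.ln (fun x => pInl ψ.ln χ.lm (ψ.lm x))
      (fun a => (φ.g a : ℤ))
      (fun q => ((compGenus ψ.ln χ.lm (fun b => (ψ.g b : ℤ)) (fun c' => (χ.g c' : ℤ)) q).toNat : ℤ))
      (toR φ.ln ψ.lm ψ.ln χ.lm c)).toNat
    = (compGenus (fun y => pInr φ.ln ψ.lm (ψ.ln y)) χ.lm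
      (fun p => ((compGenus φ.ln ψ.lm (fun a => (φ.g a : ℤ)) (fun b => (ψ.g b : ℤ)) p).toNat : ℤ))
      (fun c' => (χ.g c' : ℤ)) c).toNat
  have h1 : (fun q => ((compGenus ψ.ln χ.lm (fun b => (ψ.g b : ℤ))
      (fun c' => (χ.g c' : ℤ)) q).toNat : ℤ))
      = compGenus ψ.ln χ.lm (fun b => (ψ.g b : ℤ)) (fun c' => (χ.g c' : ℤ)) :=
    funext fun q => compGenus_toNat _ _ _ _
      (fun b => Int.natCast_nonneg _) (fun c' => Int.natCast_nonneg _) q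
  have h2 : (fun p => ((compGenus φ.ln ψ.lm (fun a => (φ.g a : ℤ))
      (fun b => (ψ.g b : ℤ)) p).toNat : ℤ))
      = compGenus φ.ln ψ.lm (fun a => (φ.g a : ℤ)) (fun b => (ψ.g b : ℤ)) :=
    funext fun p => compGenus_toNat _ _ _ _
      (fun a => Int.natCast_nonneg _) (fun b => Int.natCast_nonneg _) p
  rw [h1, h2]
  exact congrArg Int.toNat
    (genus_assoc φ.ln ψ.lm ψ.ln χ.lm (fun a => (φ.g a : ℤ)) (fun b => (ψ.g b : ℤ))
      (fun c' => (χ.g c' : ℤ)) c)
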